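/- arXiv:2406.02192 — 7 statements merged into one kernel-verified Lean document; each statement's English description precedes it below -/
import Mathlib

section
/- Let 𝒞₁ > 0 and 𝒞₂ > 0 be real numbers, and let V be a nonempty compact subset of ℂ such that every z ∈ V satisfies Im z ≥ 0 and z ≠ 0. Then there exist ε₀ > 0 and c > 0 such that for every real ε with 0 < ε < ε₀ and every z ∈ V one has |𝒞₁ − z² − i·ε·z³·𝒞₂| ≥ c·ε. -/
set_option maxHeartbeats 1000000 in
/-- Paper's lower-bound lemma: for positive constants 𝒞₁, 𝒞₂ and a nonempty compact
set `V` in the closed upper half-plane avoiding the origin, there are `ε₀, c > 0` with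
`|𝒞₁ − z² − i ε z³ 𝒞₂| ≥ c ε` for all `0 < ε < ε₀` and `z ∈ V`. -/
theorem denominator_lower_bound (C₁ C₂ : ℝ) (hC₁ : 0 < C₁) (hC₂ : 0 < C₂)
    (V : Set ℂ) (hVne : V.Nonempty) (hVcomp : IsCompact V)
    (hV : ∀ z ∈ V, 0 ≤ z.im ∧ z ≠ 0) :
    ∃ ε₀ > (0 : ℝ), ∃ c > (0 : ℝ), ∀ ε : ℝ, 0 < ε → ε < ε₀ → ∀ z ∈ V,
      c * ε ≤ ‖(C₁ : ℂ) - z ^ 2 - Complex.I * (ε : ℂ) * z ^ 3 * (C₂ : ℂ)‖ := by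
  obtain ⟨z₀, hz₀V, hz₀'⟩ := hVcomp.exists_isMaxOn hVne continuous_norm.continuousOn
  set R : ℝ := ‖z₀‖ with hRdef
  have hz₀ : ∀ w ∈ V, ‖w‖ ≤ R := fun w hw => hz₀' hw
  have hR0 : 0 ≤ R := norm_nonneg _
  set M : ℝ := C₂ * R ^ 3 + 1 with hMdef
  have hM0 : 0 < M := by positivity
  set δ : ℝ := C₁ / 3 with hδdef
  have hδ0 : 0 < δ := by positivity
  set s : ℝ := Real.sqrt (2 * C₁ / 3) with hsdef
  have hs0 : 0 < s := Real.sqrt_pos.mpr (by positivity)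
  have hs2 : s ^ 2 = 2 * C₁ / 3 := Real.sq_sqrt (by positivity)
  set c₁ : ℝ := C₂ * s * (C₁ / 2) with hc₁def
  have hc₁0 : 0 < c₁ := by positivity
  refine ⟨δ / (2 * M), by positivity, min c₁ M, lt_min hc₁0 hM0, ?_⟩
  intro ε hε hεlt z hzV
  obtain ⟨hy, -⟩ := hV z hzV
  set x := z.re with hxdef
  set y := z.im with hydef
  have habsz : ‖z‖ ≤ R := hz₀ z hzV
  have hB : ‖Complex.I * (ε : ℂ) * z ^ 3 * (C₂ : ℂ)‖ ≤ ε * M := by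
    have h : ‖Complex.I * (ε : ℂ) * z ^ 3 * (C₂ : ℂ)‖
        = ε * ‖z‖ ^ 3 * C₂ := by
      simp [map_mul, map_pow, Complex.norm_real, abs_of_pos hε, abs_of_pos hC₂]
      try ring
    rw [h, hMdef]
    have h9 : ‖z‖ ^ 3 ≤ R ^ 3 := pow_le_pow_left₀ (norm_nonneg z) habsz 3
    have h10 := mul_le_mul_of_nonneg_left h9 (by positivity : (0:ℝ) ≤ ε * C₂)
    nlinarith [h10, hε]
  by_cases hcase : δ ≤ ‖(C₁ : ℂ) - z ^ 2‖
  · -- far from the zeros of C₁ - z²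
    have htri : ‖(C₁ : ℂ) - z ^ 2‖
        ≤ ‖(C₁ : ℂ) - z ^ 2 - Complex.I * (ε : ℂ) * z ^ 3 * (C₂ : ℂ)‖
          + ‖Complex.I * (ε : ℂ) * z ^ 3 * (C₂ : ℂ)‖ := by
      have h := norm_add_le
        ((C₁ : ℂ) - z ^ 2 - Complex.I * (ε : ℂ) * z ^ 3 * (C₂ : ℂ))
        (Complex.I * (ε : ℂ) * z ^ 3 * (C₂ : ℂ))
      rwa [sub_add_cancel] at h
    have h1 : min c₁ M * ε ≤ M * ε :=
      mul_le_mul_of_nonneg_right (min_le_right _ _) hε.le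
    have h2 : ε * (2 * M) < δ := (lt_div_iff₀ (by positivity)).mp hεlt
    linarith
  · push_neg at hcase
    -- near the real zeros ±√C₁
    have hre : |C₁ - (x ^ 2 - y ^ 2)| < δ := by
      have h := Complex.abs_re_le_norm ((C₁ : ℂ) - z ^ 2)
      have hreq : ((C₁ : ℂ) - z ^ 2).re = C₁ - (x ^ 2 - y ^ 2) := by
        simp [Complex.sub_re, Complex.mul_re, pow_two]
        try ring
      rw [hreq] at h
      exact lt_of_le_of_lt h hcase
    have him : |2 * x * y| < δ := by
      have h := Complex.abs_im_le_norm ((C₁ : ℂ) - z ^ 2)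
      have himq : ((C₁ : ℂ) - z ^ 2).im = -(2 * x * y) := by
        simp [Complex.sub_im, Complex.mul_im, pow_two]
        try ring
      rw [himq, abs_neg] at h
      exact lt_of_le_of_lt h hcase
    have hre' := abs_lt.mp hre
    have hx2 : 2 * C₁ / 3 + y ^ 2 ≤ x ^ 2 := by
      have h := hre'.2
      rw [hδdef] at h
      linarith
    have hy2 : y ^ 2 ≤ C₁ / 24 := by
      have h4 : (2 * x * y) ^ 2 ≤ δ ^ 2 := by
        have := abs_lt.mp him
        nlinarith [this.1, this.2]
      rw [hδdef] at h4
      nlinarith [mul_le_mul_of_nonneg_right hx2 (sq_nonneg y), h4, hC₁,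
        sq_nonneg (y * y)]
    have hxy : C₁ / 2 ≤ x ^ 2 - 3 * y ^ 2 := by linarith
    have hxabs : s ≤ |x| := by
      rw [hsdef, ← Real.sqrt_sq_eq_abs]
      exact Real.sqrt_le_sqrt (by linarith [sq_nonneg y])
    set a : ℝ := 2 * x * y with hadef
    set b : ℝ := ε * C₂ * (x * (x ^ 2 - 3 * y ^ 2)) with hbdef
    have himf : ((C₁ : ℂ) - z ^ 2 - Complex.I * (ε : ℂ) * z ^ 3 * (C₂ : ℂ)).im
        = -(a + b) := by
      rw [hadef, hbdef]
      simp [Complex.sub_im, Complex.mul_im, Complex.mul_re, pow_succ]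
      ring
    have hab : 0 ≤ a * b := by
      have h5 : 0 ≤ ε * C₂ * (x ^ 2 * y * (x ^ 2 - 3 * y ^ 2)) := by
        have h6 : (0:ℝ) ≤ x ^ 2 - 3 * y ^ 2 := by linarith
        positivity
      have h7 : a * b = 2 * (ε * C₂ * (x ^ 2 * y * (x ^ 2 - 3 * y ^ 2))) := by
        rw [hadef, hbdef]; ring
      linarith [h5]
    have hb2 : (c₁ * ε) ^ 2 ≤ b ^ 2 := by
      have h6 : (C₁ / 2) ^ 2 ≤ (x ^ 2 - 3 * y ^ 2) ^ 2 :=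
        pow_le_pow_left₀ (by positivity) hxy 2
      have h7 : s ^ 2 ≤ x ^ 2 := by rw [hs2]; linarith [sq_nonneg y]
      have h8 : s ^ 2 * (C₁ / 2) ^ 2 ≤ x ^ 2 * (x ^ 2 - 3 * y ^ 2) ^ 2 :=
        mul_le_mul h7 h6 (by positivity) (sq_nonneg x)
      have h9 := mul_le_mul_of_nonneg_left h8
        (by positivity : (0:ℝ) ≤ ε ^ 2 * C₂ ^ 2)
      have hb2' : b ^ 2 = ε ^ 2 * C₂ ^ 2 * (x ^ 2 * (x ^ 2 - 3 * y ^ 2) ^ 2) := by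
        rw [hbdef]; ring
      have hc2' : (c₁ * ε) ^ 2 = ε ^ 2 * C₂ ^ 2 * (s ^ 2 * (C₁ / 2) ^ 2) := by
        rw [hc₁def]; ring
      rw [hb2', hc2']
      exact h9
    have hsum2 : (c₁ * ε) ^ 2 ≤ (a + b) ^ 2 := by
      have h10 : b ^ 2 ≤ (a + b) ^ 2 := by nlinarith [hab, sq_nonneg a]
      linarith
    have hkey : c₁ * ε ≤ |a + b| := by
      calc c₁ * ε = Real.sqrt ((c₁ * ε) ^ 2) := (Real.sqrt_sq (by positivity)).symm
        _ ≤ Real.sqrt ((a + b) ^ 2) := Real.sqrt_le_sqrt hsum2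
        _ = |a + b| := Real.sqrt_sq_eq_abs _
    have hfin : |a + b|
        ≤ ‖(C₁ : ℂ) - z ^ 2 - Complex.I * (ε : ℂ) * z ^ 3 * (C₂ : ℂ)‖ := by
      have h := Complex.abs_im_le_norm
        ((C₁ : ℂ) - z ^ 2 - Complex.I * (ε : ℂ) * z ^ 3 * (C₂ : ℂ))
      rwa [himf, abs_neg] at h
    have hmin : min c₁ M * ε ≤ c₁ * ε :=
      mul_le_mul_of_nonneg_right (min_le_left _ _) hε.le
    linarith
end

section
/- Let z ∈ ℂ with z ≠ 0 and Im z ≥ 0, and let s be a real number with 0 < s and s·|z| ≤ 1/2. If 0 ≤ arg z ≤ π/2, then 0 ≤ arg(1 + i·s·z) ≤ π/2 − arg z. If π/2 < arg z ≤ π, then π/2 − arg z ≤ arg(1 + i·s·z) ≤ 0. -/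
open Complex Real

/-- Argument estimate for `1 + i s z` with `Im z ≥ 0`, `0 < s`, `s |z| ≤ 1/2`:
if `0 ≤ arg z ≤ π/2` then `0 ≤ arg(1 + i s z) ≤ π/2 − arg z`, and
if `π/2 < arg z ≤ π` then `π/2 − arg z ≤ arg(1 + i s z) ≤ 0`. -/
theorem arg_one_add_I_smul (z : ℂ) (hz : z ≠ 0) (him : 0 ≤ z.im)
    (s : ℝ) (hs : 0 < s) (hsz : s * ‖z‖ ≤ 1 / 2) :
    ((0 ≤ z.arg ∧ z.arg ≤ π / 2) →
      0 ≤ (1 + Complex.I * (s : ℂ) * z).arg ∧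
        (1 + Complex.I * (s : ℂ) * z).arg ≤ π / 2 - z.arg) ∧
    ((π / 2 < z.arg ∧ z.arg ≤ π) →
      π / 2 - z.arg ≤ (1 + Complex.I * (s : ℂ) * z).arg ∧
        (1 + Complex.I * (s : ℂ) * z).arg ≤ 0) := by
  set w : ℂ := 1 + Complex.I * (s : ℂ) * z with hw
  have hwre : w.re = 1 - s * z.im := by simp [hw]; ring
  have hwim : w.im = s * z.re := by simp [hw]
  have himabs : z.im ≤ ‖z‖ := Complex.im_le_norm z
  have hsim : s * z.im ≤ 1 / 2 :=
    le_trans (by nlinarith) hsz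
  have hwrepos : 0 < w.re := by rw [hwre]; linarith
  have hw0 : w ≠ 0 := fun h => by simp [h] at hwrepos
  have hwzre : (w * z).re = z.re * (1 - 2 * (s * z.im)) := by
    rw [Complex.mul_re, hwre, hwim]; ring
  have hfac : 0 ≤ 1 - 2 * (s * z.im) := by linarith
  have hwz0 : w * z ≠ 0 := mul_ne_zero hw0 hz
  constructor
  · rintro ⟨h0, h2⟩
    have hre : 0 ≤ z.re := by
      rcases Complex.arg_le_pi_div_two_iff.mp h2 with h | h
      · exact h
      · linarith
    have hargw0 : 0 ≤ w.arg := Complex.arg_nonneg_iff.mpr (by rw [hwim]; positivity)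
    have hargw2 : w.arg ≤ π / 2 := Complex.arg_le_pi_div_two_iff.mpr (Or.inl hwrepos.le)
    have hsum : (w * z).arg = w.arg + z.arg := by
      apply Complex.arg_mul hw0 hz
      constructor
      · have := Real.pi_pos; linarith
      · linarith
    have : (w * z).arg ≤ π / 2 := by
      apply Complex.arg_le_pi_div_two_iff.mpr
      exact Or.inl (by rw [hwzre]; positivity)
    rw [hsum] at this
    exact ⟨hargw0, by linarith⟩
  · rintro ⟨h1, h2⟩
    have hre : z.re < 0 := by
      by_contra h
      push_neg at h
      exact absurd (Complex.arg_le_pi_div_two_iff.mpr (Or.inl h)) (not_le.mpr h1)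
    have hargwneg : w.arg < 0 := Complex.arg_neg_iff.mpr (by rw [hwim]; nlinarith)
    have hargw2 : -(π / 2) ≤ w.arg := Complex.neg_pi_div_two_le_arg_iff.mpr (Or.inl hwrepos.le)
    have hsum : (w * z).arg = w.arg + z.arg := by
      apply Complex.arg_mul hw0 hz
      constructor
      · have := Real.pi_pos; linarith
      · have := Complex.arg_le_pi w; linarith
    have hsumpos : 0 < (w * z).arg := by rw [hsum]; linarith
    have hge : π / 2 ≤ (w * z).arg := by
      by_contra h
      push_neg at h
      have hcos : 0 < Real.cos (w * z).arg := by
        apply Real.cos_pos_of_mem_Ioo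
        constructor
        · have := Real.pi_pos; linarith
        · exact h
      rw [Complex.cos_arg hwz0] at hcos
      have habs : 0 < ‖w * z‖ := norm_pos_iff.mpr hwz0
      have : 0 < (w * z).re := by
        have := mul_pos hcos habs
        rwa [div_mul_cancel₀ _ habs.ne'] at this
      rw [hwzre] at this
      nlinarith
    rw [hsum] at hge
    exact ⟨by linarith, hargwneg.le⟩
end

section
/- Let a > 0 be real, let z ∈ ℂ with z ≠ 0 and Im z ≥ 0, let s be a real number with 0 < s and s·|z| ≤ 1/2, and set w := z·√(1 + i·s·z), where √ denotes the principal branch of the complex square root (with nonnegative real part). If 0 ≤ arg z ≤ π/2, then Re(a + w) ≥ a. If π/2 < arg z ≤ π, then Re(a − w) ≥ a. -/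
open Complex Real

/-- Key real inequality: `(y² − X²) r ≤ (X² + y²) c` where `r = √(c² + s²X²)`,
`c = 1 − s y`, under `0 < s`, `0 ≤ y`, `s y ≤ 1/2`. -/
lemma key_ineq (s y X c r : ℝ) (hs : 0 < s) (hy : 0 ≤ y) (hc : c = 1 - s * y)
    (hsy : s * y ≤ 1 / 2) (hr : r = Real.sqrt (c ^ 2 + s ^ 2 * X ^ 2)) :
    (y ^ 2 - X ^ 2) * r ≤ (X ^ 2 + y ^ 2) * c := by
  have hc2 : (1:ℝ)/2 ≤ c := by rw [hc]; linarith
  have hrnn : 0 ≤ r := hr ▸ Real.sqrt_nonneg _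
  have hr2 : r ^ 2 = c ^ 2 + s ^ 2 * X ^ 2 := by
    rw [hr]; exact Real.sq_sqrt (by positivity)
  rcases le_or_gt (y ^ 2) (X ^ 2) with h | h
  · have h1 : (y ^ 2 - X ^ 2) * r ≤ 0 := mul_nonpos_of_nonpos_of_nonneg (by linarith) hrnn
    have h2 : 0 ≤ (X ^ 2 + y ^ 2) * c := mul_nonneg (by positivity) (by linarith)
    linarith
  · have hsY : s * (y ^ 2 - X ^ 2) ≤ 2 * y * c := by
      have h1 : s * (y ^ 2 - X ^ 2) ≤ s * y ^ 2 := by nlinarith [sq_nonneg X]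
      have h2 : s * y ^ 2 ≤ y / 2 := by nlinarith
      nlinarith
    have hsq : s ^ 2 * (y ^ 2 - X ^ 2) ^ 2 ≤ 4 * y ^ 2 * c ^ 2 := by
      have h0 : 0 ≤ s * (y ^ 2 - X ^ 2) := mul_nonneg hs.le (by linarith)
      nlinarith [hsY, h0]
    have hsq2 : ((y ^ 2 - X ^ 2) * r) ^ 2 ≤ ((X ^ 2 + y ^ 2) * c) ^ 2 := by
      have hmain : ((y ^ 2 - X ^ 2)) ^ 2 * (c ^ 2 + s ^ 2 * X ^ 2)
          ≤ (X ^ 2 + y ^ 2) ^ 2 * c ^ 2 := by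
        nlinarith [sq_nonneg X, hsq, sq_nonneg ((y^2 - X^2))]
      calc ((y ^ 2 - X ^ 2) * r) ^ 2 = (y ^ 2 - X ^ 2) ^ 2 * r ^ 2 := by ring
        _ = (y ^ 2 - X ^ 2) ^ 2 * (c ^ 2 + s ^ 2 * X ^ 2) := by rw [hr2]
        _ ≤ (X ^ 2 + y ^ 2) ^ 2 * c ^ 2 := hmain
        _ = ((X ^ 2 + y ^ 2) * c) ^ 2 := by ring
    have h1 : 0 ≤ (y ^ 2 - X ^ 2) * r := mul_nonneg (by linarith) hrnn
    have h2 : 0 ≤ (X ^ 2 + y ^ 2) * c := mul_nonneg (by positivity) (by linarith)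
    nlinarith [hsq2, h1, h2]

/-- Square-root form of the key inequality. -/
lemma key_sqrt (s y X c r : ℝ) (hs : 0 < s) (hy : 0 ≤ y) (hX : 0 ≤ X) (hc : c = 1 - s * y)
    (hsy : s * y ≤ 1 / 2) (hr : r = Real.sqrt (c ^ 2 + s ^ 2 * X ^ 2)) :
    y * Real.sqrt ((r - c) / 2) ≤ X * Real.sqrt ((r + c) / 2) := by
  have hc2 : (1:ℝ)/2 ≤ c := by rw [hc]; linarith
  have hcr : c ≤ r := by
    rw [hr]
    calc c = Real.sqrt (c ^ 2) := by rw [Real.sqrt_sq (by linarith)]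
      _ ≤ Real.sqrt (c ^ 2 + s ^ 2 * X ^ 2) :=
        Real.sqrt_le_sqrt (le_add_of_nonneg_right (by positivity))
  have key := key_ineq s y X c r hs hy hc hsy hr
  have e1 : y * Real.sqrt ((r - c) / 2) = Real.sqrt (y ^ 2 * ((r - c) / 2)) := by
    rw [Real.sqrt_mul (sq_nonneg y), Real.sqrt_sq hy]
  have e2 : X * Real.sqrt ((r + c) / 2) = Real.sqrt (X ^ 2 * ((r + c) / 2)) := by
    rw [Real.sqrt_mul (sq_nonneg X), Real.sqrt_sq hX]
  rw [e1, e2]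
  apply Real.sqrt_le_sqrt
  nlinarith [key]

/-- Real-part lower bounds for `a ± z √(1 + i s z)` (principal square root, i.e.
`w ↦ w ^ (1/2 : ℂ)`, which has nonnegative real part): if `0 ≤ arg z ≤ π/2` then
`Re(a + z√(1+isz)) ≥ a`, and if `π/2 < arg z ≤ π` then `Re(a − z√(1+isz)) ≥ a`. -/
theorem re_lower_bound_sqrt_factor (a : ℝ) (ha : 0 < a) (z : ℂ) (hz : z ≠ 0)
    (him : 0 ≤ z.im) (s : ℝ) (hs : 0 < s) (hsz : s * ‖z‖ ≤ 1 / 2) :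
    ((0 ≤ z.arg ∧ z.arg ≤ π / 2) →
      a ≤ ((a : ℂ) + z * (1 + Complex.I * (s : ℂ) * z) ^ (1 / 2 : ℂ)).re) ∧
    ((π / 2 < z.arg ∧ z.arg ≤ π) →
      a ≤ ((a : ℂ) - z * (1 + Complex.I * (s : ℂ) * z) ^ (1 / 2 : ℂ)).re) := by
  set x := z.re with hx
  set y := z.im with hy
  set v : ℂ := 1 + Complex.I * (s : ℂ) * z with hv
  set c : ℝ := 1 - s * y with hcdef
  set r : ℝ := ‖v‖ with hrdef
  have hvre : v.re = c := by rw [hv, hcdef]; simp; ring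
  have hvim : v.im = s * x := by rw [hv]; simp [hx]
  have hyle : y ≤ ‖z‖ := le_trans (le_abs_self _) (Complex.abs_im_le_norm z)
  have hsy : s * y ≤ 1 / 2 := le_trans (by nlinarith) hsz
  have hrval : r = Real.sqrt (c ^ 2 + s ^ 2 * x ^ 2) := by
    rw [hrdef, Complex.norm_def, Complex.normSq_apply, hvre, hvim]
    congr 1; ring
  have hhalf : (1 / 2 : ℂ) = (2⁻¹ : ℂ) := by norm_num
  have hure : (v ^ (1 / 2 : ℂ)).re = Real.sqrt ((r + c) / 2) := by
    rw [hhalf, Complex.cpow_inv_two_re, hvre]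
  constructor
  · rintro ⟨h1, h2⟩
    have hxnn : 0 ≤ x := by
      rcases Complex.arg_le_pi_div_two_iff.mp h2 with h | h
      · exact h
      · exact absurd him (not_le.mpr h)
    have hvimnn : 0 ≤ v.im := by rw [hvim]; positivity
    have huim : (v ^ (1 / 2 : ℂ)).im = Real.sqrt ((r - c) / 2) := by
      rw [hhalf, Complex.cpow_inv_two_im_eq_sqrt hvimnn, hvre]
    have key := key_sqrt s y x c r hs him hxnn rfl hsy hrval
    have hre : ((a : ℂ) + z * v ^ (1 / 2 : ℂ)).re
        = a + (x * (v ^ (1 / 2 : ℂ)).re - y * (v ^ (1 / 2 : ℂ)).im) := by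
      simp only [Complex.add_re, Complex.mul_re, Complex.ofReal_re, ← hx, ← hy]
    rw [hre, hure, huim]
    linarith
  · rintro ⟨h1, h2⟩
    have hxneg : x < 0 := by
      by_contra hcon
      push_neg at hcon
      exact absurd (Complex.arg_le_pi_div_two_iff.mpr (Or.inl hcon)) (not_le.mpr h1)
    have hvimneg : v.im < 0 := by rw [hvim]; exact mul_neg_of_pos_of_neg hs hxneg
    have huim : (v ^ (1 / 2 : ℂ)).im = -Real.sqrt ((r - c) / 2) := by
      rw [hhalf, Complex.cpow_inv_two_im_eq_neg_sqrt hvimneg, hvre]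
    have hrval' : r = Real.sqrt (c ^ 2 + s ^ 2 * (-x) ^ 2) := by
      rw [hrval]; ring_nf
    have key := key_sqrt s y (-x) c r hs him (by linarith) rfl hsy hrval'
    have hre : ((a : ℂ) - z * v ^ (1 / 2 : ℂ)).re
        = a - (x * (v ^ (1 / 2 : ℂ)).re - y * (v ^ (1 / 2 : ℂ)).im) := by
      simp only [Complex.sub_re, Complex.mul_re, Complex.ofReal_re, ← hx, ← hy]
    rw [hre, hure, huim]
    nlinarith [key]
end

section
/- Let ω_M > 0, 𝒞_Ω > 0 and c₀ > 0 be real numbers, and let ω ∈ ℝ with ω ≠ 0. For ε > 0 define F(ε) := (ε·ω²·𝒞_Ω)/(ω_M² − ω² − i·ε·(ω³·𝒞_Ω)/(4π c₀)) ∈ ℂ. Then, as ε → 0⁺: if ω ∉ {ω_M, −ω_M} then F(ε) tends to 0; if ω = ω_M then F(ε) tends to i·4π c₀/ω_M; and if ω = −ω_M then F(ε) tends to −i·4π c₀/ω_M. -/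
open Filter

/-- Limit of the point-scatterer coefficient
`F(ε) = ε ω² 𝒞_Ω / (ω_M² − ω² − i ε ω³ 𝒞_Ω/(4π c₀))` as `ε → 0⁺`:
it vanishes unless `ω = ±ω_M`, where the limit is `±i·4π c₀/ω_M`. -/
theorem minnaert_coefficient_limit (ωM CΩ c₀ : ℝ) (hωM : 0 < ωM) (hCΩ : 0 < CΩ)
    (hc₀ : 0 < c₀) (ω : ℝ) (hω : ω ≠ 0) (F : ℝ → ℂ)
    (hF : ∀ ε : ℝ, F ε = ((ε : ℂ) * (ω : ℂ) ^ 2 * (CΩ : ℂ)) /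
        ((ωM : ℂ) ^ 2 - (ω : ℂ) ^ 2 -
          Complex.I * (ε : ℂ) * ((ω : ℂ) ^ 3 * (CΩ : ℂ)) / (4 * (Real.pi : ℂ) * (c₀ : ℂ)))) :
    (ω ≠ ωM → ω ≠ -ωM → Tendsto F (nhdsWithin 0 (Set.Ioi 0)) (nhds 0)) ∧
    (ω = ωM →
      Tendsto F (nhdsWithin 0 (Set.Ioi 0))
        (nhds (Complex.I * (4 * (Real.pi : ℂ) * (c₀ : ℂ)) / (ωM : ℂ)))) ∧
    (ω = -ωM →
      Tendsto F (nhdsWithin 0 (Set.Ioi 0))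
        (nhds (-(Complex.I * (4 * (Real.pi : ℂ) * (c₀ : ℂ)) / (ωM : ℂ))))) := by
  have hπ : (Real.pi : ℂ) ≠ 0 := by exact_mod_cast Real.pi_ne_zero
  have hc : (c₀ : ℂ) ≠ 0 := by exact_mod_cast hc₀.ne'
  have hC : (CΩ : ℂ) ≠ 0 := by exact_mod_cast hCΩ.ne'
  have hωc : (ω : ℂ) ≠ 0 := by exact_mod_cast hω
  have hωMc : (ωM : ℂ) ≠ 0 := by exact_mod_cast hωM.ne'
  have hFe : F = fun ε : ℝ => ((ε : ℂ) * (ω : ℂ) ^ 2 * (CΩ : ℂ)) /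
        ((ωM : ℂ) ^ 2 - (ω : ℂ) ^ 2 -
          Complex.I * (ε : ℂ) * ((ω : ℂ) ^ 3 * (CΩ : ℂ)) / (4 * (Real.pi : ℂ) * (c₀ : ℂ))) :=
    funext hF
  have T : Tendsto (fun ε : ℝ => (ε : ℂ)) (nhdsWithin 0 (Set.Ioi 0)) (nhds (0 : ℂ)) := by
    simpa using (Complex.continuous_ofReal.tendsto 0).mono_left nhdsWithin_le_nhds
  refine ⟨?_, ?_, ?_⟩
  · intro h1 h2
    have hD : (ωM : ℂ) ^ 2 - (ω : ℂ) ^ 2 ≠ 0 := by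
      have hR : ωM ^ 2 - ω ^ 2 ≠ 0 := by
        intro h
        have hfac : (ωM - ω) * (ωM + ω) = 0 := by nlinarith
        rcases mul_eq_zero.mp hfac with h' | h'
        · exact h1 (by linarith)
        · exact h2 (by linarith)
      intro h
      apply hR
      have : ((ωM ^ 2 - ω ^ 2 : ℝ) : ℂ) = 0 := by push_cast; linear_combination h
      exact_mod_cast this
    have num : Tendsto (fun ε : ℝ => (ε : ℂ) * (ω : ℂ) ^ 2 * (CΩ : ℂ))
        (nhdsWithin 0 (Set.Ioi 0)) (nhds 0) := by
      simpa using (T.mul_const ((ω : ℂ) ^ 2)).mul_const (CΩ : ℂ)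
    have den : Tendsto (fun ε : ℝ => ((ωM : ℂ) ^ 2 - (ω : ℂ) ^ 2 -
          Complex.I * (ε : ℂ) * ((ω : ℂ) ^ 3 * (CΩ : ℂ)) / (4 * (Real.pi : ℂ) * (c₀ : ℂ))))
        (nhdsWithin 0 (Set.Ioi 0)) (nhds ((ωM : ℂ) ^ 2 - (ω : ℂ) ^ 2)) := by
      have hsub : Tendsto (fun ε : ℝ => Complex.I * (ε : ℂ) * ((ω : ℂ) ^ 3 * (CΩ : ℂ)) /
            (4 * (Real.pi : ℂ) * (c₀ : ℂ))) (nhdsWithin 0 (Set.Ioi 0))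
          (nhds (Complex.I * 0 * ((ω : ℂ) ^ 3 * (CΩ : ℂ)) / (4 * (Real.pi : ℂ) * (c₀ : ℂ)))) :=
        ((tendsto_const_nhds.mul T).mul_const _).div_const _
      have := (tendsto_const_nhds : Tendsto (fun _ : ℝ => (ωM : ℂ) ^ 2 - (ω : ℂ) ^ 2)
        (nhdsWithin 0 (Set.Ioi 0)) _).sub hsub
      simpa using this
    rw [hFe]
    simpa [Pi.div_def] using num.div den hD
  · intro h
    subst h
    refine Tendsto.congr' ?_ (tendsto_const_nhds :
      Tendsto (fun _ : ℝ => Complex.I * (4 * (Real.pi : ℂ) * (c₀ : ℂ)) / (ω : ℂ))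
        (nhdsWithin 0 (Set.Ioi 0)) _)
    filter_upwards [self_mem_nhdsWithin] with ε hε
    have hεc : (ε : ℂ) ≠ 0 := by exact_mod_cast (ne_of_gt hε)
    have hd : (0 : ℂ) - Complex.I * (ε : ℂ) * ((ω : ℂ) ^ 3 * (CΩ : ℂ)) /
        (4 * (Real.pi : ℂ) * (c₀ : ℂ)) ≠ 0 := by
      rw [zero_sub, neg_ne_zero]
      exact div_ne_zero (mul_ne_zero (mul_ne_zero Complex.I_ne_zero hεc)
        (mul_ne_zero (pow_ne_zero 3 hωc) hC))
        (mul_ne_zero (mul_ne_zero (by norm_num) hπ) hc)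
    rw [hF ε, sub_self ((ω : ℂ) ^ 2), div_eq_div_iff hωc hd]
    field_simp
    ring_nf
    simp [Complex.I_sq]
  · intro h
    have hωC : (ω : ℂ) = -(ωM : ℂ) := by exact_mod_cast congrArg (Complex.ofReal) h
    refine Tendsto.congr' ?_ (tendsto_const_nhds :
      Tendsto (fun _ : ℝ => -(Complex.I * (4 * (Real.pi : ℂ) * (c₀ : ℂ)) / (ωM : ℂ)))
        (nhdsWithin 0 (Set.Ioi 0)) _)
    filter_upwards [self_mem_nhdsWithin] with ε hε
    have hεc : (ε : ℂ) ≠ 0 := by exact_mod_cast (ne_of_gt hε)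
    have hd : (0 : ℂ) - Complex.I * (ε : ℂ) * ((-(ωM : ℂ)) ^ 3 * (CΩ : ℂ)) /
        (4 * (Real.pi : ℂ) * (c₀ : ℂ)) ≠ 0 := by
      rw [zero_sub, neg_ne_zero]
      exact div_ne_zero (mul_ne_zero (mul_ne_zero Complex.I_ne_zero hεc)
        (mul_ne_zero (pow_ne_zero 3 (neg_ne_zero.mpr hωMc)) hC))
        (mul_ne_zero (mul_ne_zero (by norm_num) hπ) hc)
    rw [hF ε, hωC, show ((ωM : ℂ) ^ 2 - (-(ωM:ℂ)) ^ 2) = 0 by ring,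
      eq_div_iff hd]
    field_simp
    ring_nf
    simp [Complex.I_sq]
end

section
/- Let a > 0 and b > 0 be real numbers. For all real M > 0 and K ≥ 0 there exist ε₀ > 0 and C > 0 such that: whenever 0 < ε < ε₀, z ∈ ℂ and R ∈ ℂ satisfy |z| ≤ M·ε, |R| ≤ K·ε⁴ and ε² − z²/a² − i·b·z³/a² + R = 0, then min( |z − a·ε + i·(a²·b/2)·ε²| , |z + a·ε + i·(a²·b/2)·ε²| ) ≤ C·ε³. -/
/-- Root asymptotics for the perturbed characteristic equation
`ε² − z²/a² − i b z³/a² + R = 0`: any root with `|z| ≤ M ε` and perturbation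
`|R| ≤ K ε⁴` is within `C ε³` of one of `±a ε − i (a² b/2) ε²`. -/
theorem characteristic_equation_roots (a b : ℝ) (ha : 0 < a) (hb : 0 < b) :
    ∀ M K : ℝ, 0 < M → 0 ≤ K →
      ∃ ε₀ > (0 : ℝ), ∃ C > (0 : ℝ), ∀ ε : ℝ, 0 < ε → ε < ε₀ → ∀ z R : ℂ,
        ‖z‖ ≤ M * ε → ‖R‖ ≤ K * ε ^ 4 →
        ((ε : ℂ) ^ 2 - z ^ 2 / (a : ℂ) ^ 2 - Complex.I * (b : ℂ) * z ^ 3 / (a : ℂ) ^ 2 + R = 0) →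
        min ‖z - (a : ℂ) * (ε : ℂ) + Complex.I * ((a ^ 2 * b / 2 : ℝ) : ℂ) * (ε : ℂ) ^ 2‖
            ‖z + (a : ℂ) * (ε : ℂ) + Complex.I * ((a ^ 2 * b / 2 : ℝ) : ℂ) * (ε : ℂ) ^ 2‖
          ≤ C * ε ^ 3 := by
  intro M K hM hK
  have haC : (a:ℂ) ≠ 0 := by exact_mod_cast ha.ne'
  set β : ℝ := a^2*b/2 with hβ
  set C₁ : ℝ := b^2*M^4 + b*a^2*M*K + a^2*K + β^2 with hC₁
  have hβpos : 0 < β := by positivity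
  have hC₁pos : 0 < C₁ := by positivity
  refine ⟨1, one_pos, C₁/a, by positivity, ?_⟩
  intro ε hε hε1 z R hz hR heq
  have heq' : (a:ℂ)^2*(ε:ℂ)^2 - z^2 - Complex.I*(b:ℂ)*z^3 + (a:ℂ)^2*R = 0 := by
    have h := congrArg (fun w => w * (a:ℂ)^2) heq
    simp only [zero_mul] at h
    field_simp at h
    linear_combination h
  have hβc : (β:ℂ) = (a:ℂ)^2*(b:ℂ)/2 := by push_cast [hβ]; ring
  set rp : ℂ := (a:ℂ)*(ε:ℂ) - Complex.I*(β:ℂ)*(ε:ℂ)^2 with hrp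
  set rm : ℂ := -(a:ℂ)*(ε:ℂ) - Complex.I*(β:ℂ)*(ε:ℂ)^2 with hrm
  have key : (z - rp) * (z - rm)
      = -(b:ℂ)^2*z^4 - Complex.I*(b:ℂ)*(a:ℂ)^2*z*R + (a:ℂ)^2*R - (β:ℂ)^2*(ε:ℂ)^4 := by
    rw [hrp, hrm, hβc]
    linear_combination (Complex.I*(b:ℂ)*z - 1) * heq' +
      (((a:ℂ)^2*(b:ℂ)/2)^2*(ε:ℂ)^4 + (b:ℂ)^2*z^4) * Complex.I_sq
  set A : ℝ := ‖z - rp‖ with hA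
  set B : ℝ := ‖z - rm‖ with hB
  have hAnn : 0 ≤ A := norm_nonneg _
  have hBnn : 0 ≤ B := norm_nonneg _
  have hε4 : ε^5 ≤ ε^4 := by nlinarith [pow_pos hε 4]
  -- product bound
  have hprod : A * B ≤ C₁ * ε^4 := by
    have h1 : A * B = ‖(z - rp) * (z - rm)‖ := (norm_mul _ _).symm
    rw [h1, key]
    have tri : ‖-(b:ℂ)^2*z^4 - Complex.I*(b:ℂ)*(a:ℂ)^2*z*R + (a:ℂ)^2*R - (β:ℂ)^2*(ε:ℂ)^4‖
        ≤ ‖-(b:ℂ)^2*z^4‖ + ‖Complex.I*(b:ℂ)*(a:ℂ)^2*z*R‖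
          + ‖(a:ℂ)^2*R‖ + ‖(β:ℂ)^2*(ε:ℂ)^4‖ := by
      calc ‖-(b:ℂ)^2*z^4 - Complex.I*(b:ℂ)*(a:ℂ)^2*z*R + (a:ℂ)^2*R - (β:ℂ)^2*(ε:ℂ)^4‖
          ≤ ‖-(b:ℂ)^2*z^4 - Complex.I*(b:ℂ)*(a:ℂ)^2*z*R + (a:ℂ)^2*R‖
            + ‖(β:ℂ)^2*(ε:ℂ)^4‖ := norm_sub_le _ _
        _ ≤ ‖-(b:ℂ)^2*z^4 - Complex.I*(b:ℂ)*(a:ℂ)^2*z*R‖ + ‖(a:ℂ)^2*R‖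
            + ‖(β:ℂ)^2*(ε:ℂ)^4‖ := by
              gcongr; exact norm_add_le _ _
        _ ≤ ‖-(b:ℂ)^2*z^4‖ + ‖Complex.I*(b:ℂ)*(a:ℂ)^2*z*R‖
            + ‖(a:ℂ)^2*R‖ + ‖(β:ℂ)^2*(ε:ℂ)^4‖ := by
              gcongr; exact norm_sub_le _ _
    refine tri.trans ?_
    have e1 : ‖-(b:ℂ)^2*z^4‖ = b^2 * ‖z‖ ^ 4 := by
      simp [map_mul, map_pow, abs_of_pos hb]
    have e2 : ‖Complex.I*(b:ℂ)*(a:ℂ)^2*z*R‖ = b * a^2 * ‖z‖ * ‖R‖ := by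
      simp [map_mul, map_pow, abs_of_pos hb, abs_of_pos ha]
    have e3 : ‖(a:ℂ)^2*R‖ = a^2 * ‖R‖ := by
      simp [map_mul, map_pow, abs_of_pos ha]
    have e4 : ‖(β:ℂ)^2*(ε:ℂ)^4‖ = β^2 * ε^4 := by
      simp [map_mul, map_pow, abs_of_pos hβpos, abs_of_pos hε]
    rw [e1, e2, e3, e4]
    have hz4 : ‖z‖ ^ 4 ≤ (M*ε)^4 :=
      pow_le_pow_left₀ (norm_nonneg z) hz 4
    have hzRn : ‖z‖ * ‖R‖ ≤ (M*ε) * (K*ε^4) :=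
      mul_le_mul hz hR (norm_nonneg _) (by positivity)
    have hRn : ‖R‖ ≤ K * ε^4 := hR
    rw [hC₁]
    nlinarith [sq_nonneg b, sq_nonneg a, mul_pos ha hb, pow_pos hε 4,
      mul_le_mul_of_nonneg_left hz4 (sq_nonneg b),
      mul_le_mul_of_nonneg_left hzRn (by positivity : (0:ℝ) ≤ b*a^2),
      mul_le_mul_of_nonneg_left hRn (sq_nonneg a),
      mul_le_mul_of_nonneg_left hε4 (by positivity : (0:ℝ) ≤ b*a^2*M*K)]
  -- sum lower bound
  have hsum : 2*a*ε ≤ A + B := by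
    have h1 : ‖rm - rp‖ ≤ A + B := by
      have : rm - rp = (z - rp) - (z - rm) := by ring
      rw [this]
      exact norm_sub_le _ _
    have h2 : ‖rm - rp‖ = 2*a*ε := by
      rw [hrp, hrm]
      have : -(a:ℂ)*(ε:ℂ) - Complex.I*(β:ℂ)*(ε:ℂ)^2 - ((a:ℂ)*(ε:ℂ) - Complex.I*(β:ℂ)*(ε:ℂ)^2)
          = ((-2*a*ε : ℝ) : ℂ) := by push_cast; ring
      rw [this, Complex.norm_real, Real.norm_eq_abs]
      rw [abs_of_nonpos (by nlinarith)]
      ring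
    linarith [h2 ▸ h1]
  have hmax : a*ε ≤ max A B := by
    rcases le_total A B with h | h
    · rw [max_eq_right h]; linarith [min_le_left A B]
    · rw [max_eq_left h]; linarith
  have hmin : min A B ≤ C₁/a * ε^3 := by
    have h1 : min A B * (a*ε) ≤ C₁ * ε^4 := by
      calc min A B * (a*ε) ≤ min A B * max A B :=
            mul_le_mul_of_nonneg_left hmax (le_min hAnn hBnn)
        _ = A * B := min_mul_max A B
        _ ≤ C₁ * ε^4 := hprod
    have h2 : (min A B * a) * ε ≤ (C₁ * ε^3) * ε := by
      calc (min A B * a) * ε = min A B * (a*ε) := by ring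
        _ ≤ C₁ * ε^4 := h1
        _ = (C₁ * ε^3) * ε := by ring
    have h3 : min A B * a ≤ C₁ * ε^3 := le_of_mul_le_mul_right h2 hε
    have h4 : C₁/a * ε^3 = (C₁ * ε^3)/a := by ring
    rw [h4, le_div_iff₀ ha]
    exact h3
  have hgoalp : z - (a:ℂ)*(ε:ℂ) + Complex.I * (β : ℂ) * (ε:ℂ)^2 = z - rp := by
    rw [hrp]; ring
  have hgoalm : z + (a:ℂ)*(ε:ℂ) + Complex.I * (β : ℂ) * (ε:ℂ)^2 = z - rm := by
    rw [hrm]; ring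
  rw [hgoalp, hgoalm]
  exact hmin
end

section
/- Let y₀ ∈ ℝ³, let Ω ⊂ ℝ³ be a nonempty bounded measurable set, let R := sup_{x ∈ Ω} ‖x − y₀‖, let ε > 0, and set Ω_ε := {y₀ + ε(y − y₀) : y ∈ Ω}. Let z ∈ ℂ with Im z ≥ 0, let c₀ > 0, and let f : ℝ³ → ℂ be measurable. Then | ∫_{Ω_ε} e^{i z ‖y₀ − y‖/c₀} / (4π ‖y₀ − y‖) · f(y) dy | ≤ √(R·ε/(4π)) · ( ∫_{ℝ³} |f(y)|² dy )^{1/2}. -/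
open MeasureTheory Metric Set Module Complex
open scoped ENNReal NNReal

lemma lintegral_fun_norm_addHaar' {E : Type*} [NormedAddCommGroup E] [NormedSpace ℝ E]
    [Nontrivial E] [MeasurableSpace E] [BorelSpace E] [FiniteDimensional ℝ E]
    (μ : Measure E) [μ.IsAddHaarMeasure] (f : ℝ → ℝ≥0∞) (hf : Measurable f) :
    ∫⁻ x, f ‖x‖ ∂μ =
      (finrank ℝ E) * μ (ball 0 1) *
        ∫⁻ y in Ioi (0 : ℝ), ENNReal.ofReal (y ^ (finrank ℝ E - 1)) * f y := by
  have hm2 : Measurable fun p : sphere (0 : E) 1 × Ioi (0 : ℝ) => f p.2 :=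
    hf.comp (measurable_subtype_coe.comp measurable_snd)
  calc
    ∫⁻ x, f ‖x‖ ∂μ = ∫⁻ x : ({(0 : E)}ᶜ : Set E), f ‖x.1‖ ∂(μ.comap (↑)) := by
      rw [lintegral_subtype_comap (measurableSet_singleton _).compl fun x => f ‖x‖,
        MeasureTheory.restrict_compl_singleton]
    _ = ∫⁻ p : sphere (0 : E) 1 × Ioi (0 : ℝ), f p.2
          ∂μ.toSphere.prod (.volumeIoiPow (finrank ℝ E - 1)) := by
      rw [← (μ.measurePreserving_homeomorphUnitSphereProd).lintegral_comp hm2]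
      exact lintegral_congr fun x => by simp
    _ = μ.toSphere univ * ∫⁻ r : Ioi (0 : ℝ), f r ∂(.volumeIoiPow (finrank ℝ E - 1)) := by
      rw [lintegral_prod _ hm2.aemeasurable]
      simp only [Prod.snd]
      rw [lintegral_const]
      ring
    _ = _ := by
      have h1 : Measurable fun r : Ioi (0 : ℝ) => ENNReal.ofReal (r.1 ^ (finrank ℝ E - 1)) :=
        (measurable_subtype_coe.pow_const _).ennreal_ofReal
      have h2 : Measurable fun r : Ioi (0 : ℝ) => f r.1 := hf.comp measurable_subtype_coe
      rw [Measure.volumeIoiPow, lintegral_withDensity_eq_lintegral_mul _ h1 h2,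
        Measure.toSphere_apply_univ]
      congr 1
      exact lintegral_subtype_comap measurableSet_Ioi
        fun y => ENNReal.ofReal (y ^ (finrank ℝ E - 1)) * f y

lemma lintegral_kernel_closedBall (ρ : ℝ) (hρ : 0 ≤ ρ) :
    ∫⁻ x in closedBall (0 : EuclideanSpace ℝ (Fin 3)) ρ,
        ENNReal.ofReal (((4 * Real.pi * ‖x‖)⁻¹) ^ 2) = ENNReal.ofReal (ρ / (4 * Real.pi)) := by
  have hπ : (0 : ℝ) < Real.pi := Real.pi_pos
  set f : ℝ → ℝ≥0∞ :=
    fun r => (Icc (0 : ℝ) ρ).indicator (fun r => ENNReal.ofReal (((4 * Real.pi * r)⁻¹) ^ 2)) r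
    with hfdef
  have hfm : Measurable f :=
    Measurable.indicator (by fun_prop) measurableSet_Icc
  have h1 : ∫⁻ x in closedBall (0 : EuclideanSpace ℝ (Fin 3)) ρ,
      ENNReal.ofReal (((4 * Real.pi * ‖x‖)⁻¹) ^ 2) = ∫⁻ x : EuclideanSpace ℝ (Fin 3), f ‖x‖ := by
    rw [← lintegral_indicator measurableSet_closedBall]
    refine lintegral_congr fun x => ?_
    simp only [hfdef, indicator, mem_closedBall_zero_iff, mem_Icc, norm_nonneg, true_and]
  rw [h1, lintegral_fun_norm_addHaar' volume f hfm]
  have hrank : finrank ℝ (EuclideanSpace ℝ (Fin 3)) = 3 := by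
    simp [finrank_euclideanSpace]
  rw [hrank]
  have h2 : ∫⁻ y in Ioi (0 : ℝ), ENNReal.ofReal (y ^ (3 - 1)) * f y =
      ENNReal.ofReal (((4 * Real.pi)⁻¹) ^ 2) * ENNReal.ofReal ρ := by
    have : ∀ y ∈ Ioi (0 : ℝ), ENNReal.ofReal (y ^ (3 - 1)) * f y =
        (Ioc (0 : ℝ) ρ).indicator (fun _ => ENNReal.ofReal (((4 * Real.pi)⁻¹) ^ 2)) y := by
      intro y hy
      rw [mem_Ioi] at hy
      by_cases hyρ : y ≤ ρ
      · rw [hfdef]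
        simp only
        rw [indicator_of_mem (mem_Icc.mpr ⟨hy.le, hyρ⟩), indicator_of_mem (mem_Ioc.mpr ⟨hy, hyρ⟩),
          ← ENNReal.ofReal_mul (by positivity)]
        congr 1
        field_simp
      · rw [hfdef]
        simp only
        rw [indicator_of_notMem (fun h => hyρ h.2), indicator_of_notMem (fun h => hyρ h.2),
          mul_zero]
    rw [setLIntegral_congr_fun measurableSet_Ioi this,
      lintegral_indicator measurableSet_Ioc, Measure.restrict_restrict measurableSet_Ioc,
      inter_eq_left.mpr Ioc_subset_Ioi_self, setLIntegral_const, Real.volume_Ioc, sub_zero]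
  rw [h2]
  have hball : volume (ball (0 : EuclideanSpace ℝ (Fin 3)) 1) =
      ENNReal.ofReal (4 / 3 * Real.pi) := by
    rw [EuclideanSpace.volume_ball]
    have hΓ : Real.Gamma ((Fintype.card (Fin 3) : ℝ) / 2 + 1) = 3 / 4 * Real.sqrt Real.pi := by
      have h32 : ((Fintype.card (Fin 3) : ℝ)) / 2 = 1 / 2 + 1 := by
        simp [Fintype.card_fin]; norm_num
      rw [h32, Real.Gamma_add_one (by norm_num), Real.Gamma_add_one (by norm_num),
        Real.Gamma_one_half_eq]
      ring
    rw [hΓ]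
    have hs : Real.sqrt Real.pi ^ Fintype.card (Fin 3) = Real.pi * Real.sqrt Real.pi := by
      rw [Fintype.card_fin, show (3 : ℕ) = 2 + 1 from rfl, pow_succ, Real.sq_sqrt hπ.le]
    rw [hs]
    have hsne : Real.sqrt Real.pi ≠ 0 := by positivity
    rw [ENNReal.ofReal_one, one_pow, one_mul]
    congr 1
    field_simp
  rw [hball]
  rw [show ((3 : ℕ) : ℝ≥0∞) = ENNReal.ofReal 3 by simp]
  rw [← ENNReal.ofReal_mul (by norm_num), ← ENNReal.ofReal_mul (by positivity),
    ← ENNReal.ofReal_mul (by positivity)]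
  congr 1
  field_simp

/-- Free resolvent at the center of a shrunken inclusion: for `Ω_ε = y₀ + ε(Ω − y₀)`,
`Im z ≥ 0`, the integral of the Helmholtz kernel against `f` over `Ω_ε` is bounded by
`√(Rε/(4π))` times the `L²` norm of `f`, where `R = sup_{x∈Ω} ‖x − y₀‖`. -/
theorem resolvent_at_center_small (y₀ : EuclideanSpace ℝ (Fin 3))
    (Ω : Set (EuclideanSpace ℝ (Fin 3))) (hΩne : Ω.Nonempty)
    (hΩb : Bornology.IsBounded Ω) (hΩm : MeasurableSet Ω)
    (R : ℝ) (hR : IsLUB ((fun x => ‖x - y₀‖) '' Ω) R)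
    (ε : ℝ) (hε : 0 < ε) (z : ℂ) (hz : 0 ≤ z.im) (c₀ : ℝ) (hc₀ : 0 < c₀)
    (f : EuclideanSpace ℝ (Fin 3) → ℂ) (hf : Measurable f) :
    ENNReal.ofReal
        ‖∫ y in (fun y => y₀ + ε • (y - y₀)) '' Ω,
            Complex.exp (Complex.I * z * (‖y₀ - y‖ : ℂ) / (c₀ : ℂ)) /
              (4 * (Real.pi : ℂ) * (‖y₀ - y‖ : ℂ)) * f y‖ ≤
      ENNReal.ofReal (Real.sqrt (R * ε / (4 * Real.pi))) *
        (∫⁻ y, (‖f y‖₊ : ℝ≥0∞) ^ 2) ^ ((1 : ℝ) / 2) := by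
  have hπ : (0 : ℝ) < Real.pi := Real.pi_pos
  set S : Set (EuclideanSpace ℝ (Fin 3)) := (fun y => y₀ + ε • (y - y₀)) '' Ω with hS
  set g : EuclideanSpace ℝ (Fin 3) → ℂ := fun y =>
    Complex.exp (Complex.I * z * (‖y₀ - y‖ : ℂ) / (c₀ : ℂ)) /
      (4 * (Real.pi : ℂ) * (‖y₀ - y‖ : ℂ)) with hg
  -- R ≥ 0
  have hR0 : 0 ≤ R := by
    obtain ⟨x, hx⟩ := hΩne
    exact le_trans (norm_nonneg _) (hR.1 ⟨x, hx, rfl⟩)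
  -- pointwise bound on g
  have hgb : ∀ y : EuclideanSpace ℝ (Fin 3), ‖g y‖ ≤ (4 * Real.pi * ‖y₀ - y‖)⁻¹ := by
    intro y
    set r : ℝ := ‖y₀ - y‖ with hr
    have hr0 : 0 ≤ r := norm_nonneg _
    have hden : (4 * (Real.pi : ℂ) * (r : ℂ)) = ((4 * Real.pi * r : ℝ) : ℂ) := by push_cast; ring
    rcases eq_or_lt_of_le hr0 with h0 | hpos
    · rw [hg]
      simp only
      rw [← hr, ← h0]
      simp
    · have hexp : ‖Complex.exp (Complex.I * z * (r : ℂ) / (c₀ : ℂ))‖ ≤ 1 := by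
        rw [Complex.norm_exp, Real.exp_le_one_iff]
        have : Complex.I * z * (r : ℂ) / (c₀ : ℂ) = ((r / c₀ : ℝ) : ℂ) * (Complex.I * z) := by
          push_cast
          field_simp
        rw [this, Complex.re_ofReal_mul]
        have h1 : (Complex.I * z).re = -z.im := by simp
        rw [h1]
        have : (0:ℝ) ≤ r / c₀ := by positivity
        nlinarith
      rw [hg]
      simp only
      rw [norm_div, hden, Complex.norm_real, Real.norm_eq_abs,
        abs_of_pos (by positivity : (0:ℝ) < 4 * Real.pi * r)]
      rw [inv_eq_one_div]
      gcongr
  have hgm : Measurable g := by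
    rw [hg]
    fun_prop
  have hp2 : ∀ x : ℝ≥0∞, x ^ ((2:ℕ):ℝ) = x ^ (2:ℕ) := fun x => ENNReal.rpow_natCast x 2
  -- pointwise squared bound
  have hgpt : ∀ y : EuclideanSpace ℝ (Fin 3), (‖g y‖₊ : ℝ≥0∞) ^ ((2:ℕ):ℝ) ≤
      ENNReal.ofReal (((4 * Real.pi * ‖y₀ - y‖)⁻¹) ^ 2) := by
    intro y
    rw [hp2, ← enorm_eq_nnnorm, ← ofReal_norm, ← ENNReal.ofReal_pow (norm_nonneg _)]
    exact ENNReal.ofReal_le_ofReal (pow_le_pow_left₀ (norm_nonneg _) (hgb y) 2)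
  -- subset of closed ball
  have hsub : S ⊆ closedBall y₀ (R * ε) := by
    rintro _ ⟨x, hx, rfl⟩
    have hxR : ‖x - y₀‖ ≤ R := hR.1 ⟨x, hx, rfl⟩
    simp only [mem_closedBall]
    rw [dist_eq_norm]
    have heq : y₀ + ε • (x - y₀) - y₀ = ε • (x - y₀) := by abel
    rw [heq, norm_smul, Real.norm_eq_abs, abs_of_pos hε]
    nlinarith [norm_nonneg (x - y₀)]
  -- the g-integral bound
  have hgint : ∫⁻ y in S, (‖g y‖₊ : ℝ≥0∞) ^ ((2:ℕ):ℝ) ≤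
      ENNReal.ofReal (R * ε / (4 * Real.pi)) := by
    calc ∫⁻ y in S, (‖g y‖₊ : ℝ≥0∞) ^ ((2:ℕ):ℝ)
        ≤ ∫⁻ y in S, ENNReal.ofReal (((4 * Real.pi * ‖y₀ - y‖)⁻¹) ^ 2) :=
          lintegral_mono fun y => hgpt y
      _ ≤ ∫⁻ y in closedBall y₀ (R * ε),
            ENNReal.ofReal (((4 * Real.pi * ‖y₀ - y‖)⁻¹) ^ 2) :=
          lintegral_mono' (Measure.restrict_mono hsub le_rfl) le_rfl
      _ = ∫⁻ x in closedBall (0 : EuclideanSpace ℝ (Fin 3)) (R * ε),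
            ENNReal.ofReal (((4 * Real.pi * ‖x‖)⁻¹) ^ 2) := by
          have hT : MeasurePreserving (fun x : EuclideanSpace ℝ (Fin 3) => y₀ - x) volume volume :=
            Measure.measurePreserving_sub_left volume y₀
          have h := hT.setLIntegral_comp_emb
            (MeasurableEquiv.subLeft y₀).measurableEmbedding
            (fun y => ENNReal.ofReal (((4 * Real.pi * ‖y₀ - y‖)⁻¹) ^ 2))
            (closedBall (0 : EuclideanSpace ℝ (Fin 3)) (R * ε))
          have himg : (fun x : EuclideanSpace ℝ (Fin 3) => y₀ - x) '' closedBall (0 : EuclideanSpace ℝ (Fin 3)) (R * ε) =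
              closedBall y₀ (R * ε) := by
            ext x
            constructor
            · rintro ⟨w, hw, rfl⟩
              rw [mem_closedBall, dist_eq_norm]
              simpa using mem_closedBall_zero_iff.1 hw
            · intro hx
              refine ⟨y₀ - x, ?_, sub_sub_cancel y₀ x⟩
              rw [mem_closedBall_zero_iff]
              rw [mem_closedBall, dist_eq_norm] at hx
              simpa [norm_sub_rev] using hx
          rw [himg] at h
          rw [← h]
          refine setLIntegral_congr_fun measurableSet_closedBall (fun x _ => ?_)
          rw [sub_sub_cancel]
      _ = ENNReal.ofReal (R * ε / (4 * Real.pi)) :=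
          lintegral_kernel_closedBall (R * ε) (by positivity)
  -- main chain
  rw [ofReal_norm, enorm_eq_nnnorm]
  calc (‖∫ y in S, g y * f y‖₊ : ℝ≥0∞)
      ≤ ∫⁻ y in S, ‖g y * f y‖₊ := enorm_integral_le_lintegral_enorm _
    _ = ∫⁻ y in S, (‖g y‖₊ : ℝ≥0∞) * (‖f y‖₊ : ℝ≥0∞) := by
        simp [nnnorm_mul, ENNReal.coe_mul]
    _ ≤ (∫⁻ y in S, (‖g y‖₊ : ℝ≥0∞) ^ ((2:ℕ):ℝ)) ^ ((1:ℝ)/2) *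
        (∫⁻ y in S, (‖f y‖₊ : ℝ≥0∞) ^ ((2:ℕ):ℝ)) ^ ((1:ℝ)/2) := by
        have hcon : Real.HolderConjugate ((2:ℕ):ℝ) ((2:ℕ):ℝ) := by
          constructor <;> norm_num
        exact ENNReal.lintegral_mul_le_Lp_mul_Lq _ hcon
          hgm.enorm.aemeasurable hf.enorm.aemeasurable
    _ ≤ ENNReal.ofReal (Real.sqrt (R * ε / (4 * Real.pi))) *
        (∫⁻ y, (‖f y‖₊ : ℝ≥0∞) ^ 2) ^ ((1:ℝ)/2) := by
        refine mul_le_mul' ?_ ?_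
        · calc (∫⁻ y in S, (‖g y‖₊ : ℝ≥0∞) ^ ((2:ℕ):ℝ)) ^ ((1:ℝ)/2)
              ≤ (ENNReal.ofReal (R * ε / (4 * Real.pi))) ^ ((1:ℝ)/2) :=
                ENNReal.rpow_le_rpow hgint (by norm_num)
            _ = ENNReal.ofReal (Real.sqrt (R * ε / (4 * Real.pi))) := by
                rw [Real.sqrt_eq_rpow,
                  ← ENNReal.ofReal_rpow_of_nonneg (by positivity) (by norm_num)]
        · refine ENNReal.rpow_le_rpow ?_ (by norm_num)
          simp_rw [hp2]
          exact setLIntegral_le_lintegral _ _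
end

section
/- Let Ω ⊂ ℝ³ be a bounded measurable set with Lebesgue measure |Ω|, let y₀ ∈ ℝ³, ε > 0, and set Ω_ε := {y₀ + ε(y − y₀) : y ∈ Ω}. Let z ∈ ℂ with Im z ≥ 0, let c₀ > 0, let f : ℝ³ → ℂ be square-integrable and let g : ℝ³ → ℂ be measurable. Assume that the function (x, y) ↦ e^{i z ‖x − y‖/c₀} · f(y) · g(x)/(4π ‖x − y‖) is integrable on ℝ³ × Ω_ε, and that K ≥ 0 satisfies | ∫_{ℝ³} e^{i z ‖y − x‖/c₀}/(4π ‖y − x‖) · g(x) dx | ≤ K for every y ∈ Ω_ε. Then | ∫_{ℝ³} ( ∫_{Ω_ε} e^{i z ‖x − y‖/c₀}/(4π ‖x − y‖) · f(y) dy ) · g(x) dx | ≤ K · ε^{3/2} · |Ω|^{1/2} · ( ∫_{ℝ³} |f|² )^{1/2}. -/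
open MeasureTheory Complex
open scoped ENNReal

/-- Duality estimate: the pairing of the free resolvent applied to a source truncated to
the shrunken domain `Ω_ε = y₀ + ε(Ω − y₀)` against `g` is of order `ε^{3/2}`. -/
theorem truncated_source_duality_estimate (Ω : Set (EuclideanSpace ℝ (Fin 3)))
    (hΩb : Bornology.IsBounded Ω) (hΩm : MeasurableSet Ω)
    (y₀ : EuclideanSpace ℝ (Fin 3)) (ε : ℝ) (hε : 0 < ε)
    (z : ℂ) (hz : 0 ≤ z.im) (c₀ : ℝ) (hc₀ : 0 < c₀)
    (f g : EuclideanSpace ℝ (Fin 3) → ℂ) (hf : MemLp f 2 volume) (hg : Measurable g)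
    (hint : IntegrableOn
      (fun p : EuclideanSpace ℝ (Fin 3) × EuclideanSpace ℝ (Fin 3) =>
        Complex.exp (Complex.I * z * (‖p.1 - p.2‖ : ℂ) / (c₀ : ℂ)) * f p.2 * g p.1 /
          (4 * (Real.pi : ℂ) * (‖p.1 - p.2‖ : ℂ)))
      (Set.univ ×ˢ ((fun y => y₀ + ε • (y - y₀)) '' Ω)))
    (K : ℝ) (hK0 : 0 ≤ K)
    (hK : ∀ y ∈ (fun y => y₀ + ε • (y - y₀)) '' Ω,
      ‖∫ x, Complex.exp (Complex.I * z * (‖y - x‖ : ℂ) / (c₀ : ℂ)) /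
          (4 * (Real.pi : ℂ) * (‖y - x‖ : ℂ)) * g x‖ ≤ K) :
    ‖∫ x, (∫ y in (fun y => y₀ + ε • (y - y₀)) '' Ω,
        Complex.exp (Complex.I * z * (‖x - y‖ : ℂ) / (c₀ : ℂ)) /
          (4 * (Real.pi : ℂ) * (‖x - y‖ : ℂ)) * f y) * g x‖ ≤
      K * ε ^ ((3 : ℝ) / 2) * Real.sqrt ((volume Ω).toReal) * Real.sqrt (∫ y, ‖f y‖ ^ 2) := by
  set S : Set (EuclideanSpace ℝ (Fin 3)) := (fun y => y₀ + ε • (y - y₀)) '' Ω with hS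
  -- measurability of S
  have hSmeas : MeasurableSet S := by
    have hSpre : S = (fun x => y₀ + ε⁻¹ • (x - y₀)) ⁻¹' Ω := by
      ext x
      simp only [hS, Set.mem_image, Set.mem_preimage]
      constructor
      · rintro ⟨y, hy, rfl⟩
        have : y₀ + ε⁻¹ • (y₀ + ε • (y - y₀) - y₀) = y := by
          rw [add_sub_cancel_left, smul_smul, inv_mul_cancel₀ hε.ne', one_smul]
          abel
        rwa [this]
      · intro hx
        refine ⟨y₀ + ε⁻¹ • (x - y₀), hx, ?_⟩
        rw [add_sub_cancel_left, smul_smul, mul_inv_cancel₀ hε.ne', one_smul]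
        abel
    rw [hSpre]
    exact hΩm.preimage
      ((continuous_const.add ((continuous_id.sub continuous_const).const_smul ε⁻¹)).measurable)
  -- S as image under homothety, and its measure
  have hShom : S = AffineMap.homothety y₀ ε '' Ω := by
    apply Set.image_congr
    intro y _
    simp only [AffineMap.homothety_apply, vsub_eq_sub, vadd_eq_add]
    abel
  have hSvol : volume S = ENNReal.ofReal (ε ^ 3) * volume Ω := by
    rw [hShom, Measure.addHaar_image_homothety]
    congr 2
    simp [finrank_euclideanSpace, abs_of_pos (pow_pos hε 3)]
  have hΩfin : volume Ω < ∞ := hΩb.measure_lt_top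
  have hSfin : volume S < ∞ := by
    rw [hSvol]
    exact ENNReal.mul_lt_top ENNReal.ofReal_lt_top hΩfin
  haveI hFin : IsFiniteMeasure (volume.restrict S) :=
    ⟨by simpa [Measure.restrict_apply_univ] using hSfin⟩
  -- integrability of f on S
  have hfS : IntegrableOn f S volume := (hf.restrict S).integrable (by norm_num)
  -- the kernel paired with g, as a function of y
  set h : EuclideanSpace ℝ (Fin 3) → ℂ := fun y =>
    ∫ x, Complex.exp (Complex.I * z * (‖y - x‖ : ℂ) / (c₀ : ℂ)) /
      (4 * (Real.pi : ℂ) * (‖y - x‖ : ℂ)) * g x with hh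
  -- Fubini step
  have hintF : Integrable
      (fun p : EuclideanSpace ℝ (Fin 3) × EuclideanSpace ℝ (Fin 3) =>
        Complex.exp (Complex.I * z * (‖p.1 - p.2‖ : ℂ) / (c₀ : ℂ)) * f p.2 * g p.1 /
          (4 * (Real.pi : ℂ) * (‖p.1 - p.2‖ : ℂ)))
      (volume.prod (volume.restrict S)) := by
    have heq : volume.prod (volume.restrict S) =
        ((volume : Measure (EuclideanSpace ℝ (Fin 3))).restrict Set.univ).prod
          (volume.restrict S) := by rw [Measure.restrict_univ]
    rw [heq, Measure.prod_restrict]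
    simpa [IntegrableOn, Measure.volume_eq_prod] using hint
  have hswap : ∫ x, (∫ y in S,
        Complex.exp (Complex.I * z * (‖x - y‖ : ℂ) / (c₀ : ℂ)) /
          (4 * (Real.pi : ℂ) * (‖x - y‖ : ℂ)) * f y) * g x
      = ∫ y in S, f y * h y := by
    have h1 : ∀ x : EuclideanSpace ℝ (Fin 3), (∫ y in S,
        Complex.exp (Complex.I * z * (‖x - y‖ : ℂ) / (c₀ : ℂ)) /
          (4 * (Real.pi : ℂ) * (‖x - y‖ : ℂ)) * f y) * g x
        = ∫ y in S,
            Complex.exp (Complex.I * z * (‖x - y‖ : ℂ) / (c₀ : ℂ)) * f y * g x /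
              (4 * (Real.pi : ℂ) * (‖x - y‖ : ℂ)) := by
      intro x
      rw [← integral_mul_const]
      congr 1 with y
      ring
    simp_rw [h1]
    rw [MeasureTheory.integral_integral_swap hintF]
    refine setIntegral_congr_fun hSmeas fun y _ => ?_
    rw [hh]
    simp only
    rw [← integral_const_mul]
    congr 1 with x
    rw [norm_sub_rev]
    ring
  rw [hswap]
  -- pointwise bound
  have hbound1 : ‖∫ y in S, f y * h y‖ ≤ ∫ y in S, K * ‖f y‖ := by
    refine le_trans (norm_integral_le_integral_norm _) ?_
    refine integral_mono_of_nonneg (Filter.Eventually.of_forall fun y => norm_nonneg _)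
      (hfS.norm.const_mul K) ?_
    refine (ae_restrict_iff' hSmeas).2 (Filter.Eventually.of_forall fun y hy => ?_)
    calc ‖f y * h y‖ = ‖f y‖ * ‖h y‖ := norm_mul _ _
      _ ≤ ‖f y‖ * K := mul_le_mul_of_nonneg_left (hK y hy) (norm_nonneg _)
      _ = K * ‖f y‖ := mul_comm _ _
  -- Cauchy–Schwarz on S
  have hconj : Real.HolderConjugate 2 2 := Real.holderConjugate_iff.mpr ⟨one_lt_two, by norm_num⟩
  have hfnorm : MemLp (fun y => ‖f y‖) (ENNReal.ofReal 2) (volume.restrict S) := by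
    have : (ENNReal.ofReal 2) = (2 : ℝ≥0∞) := by norm_num
    rw [this]
    exact (hf.restrict S).norm
  have hone : MemLp (fun _ : EuclideanSpace ℝ (Fin 3) => (1 : ℝ)) (ENNReal.ofReal 2)
      (volume.restrict S) := memLp_const 1
  have hCS := MeasureTheory.integral_mul_le_Lp_mul_Lq_of_nonneg hconj
    (Filter.Eventually.of_forall fun y => norm_nonneg (f y))
    (Filter.Eventually.of_forall fun _ => zero_le_one) hfnorm hone
  simp only [mul_one, Real.one_rpow, one_pow] at hCS
  -- compute the constant-function integral
  have hone_int : ∫ _ in S, (1 : ℝ) = (volume S).toReal := by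
    simp [Measure.restrict_apply_univ, Measure.real]
  -- ∫ₛ ‖f‖ ^ 2 ≤ ∫ ‖f‖ ^ 2
  have hf2 : Integrable (fun y => ‖f y‖ ^ 2) volume := hf.norm.integrable_sq
  have hsub : ∫ y in S, ‖f y‖ ^ (2 : ℝ) ≤ ∫ y, ‖f y‖ ^ 2 := by
    have : ∀ y, ‖f y‖ ^ (2 : ℝ) = ‖f y‖ ^ (2 : ℕ) := fun y => by
      rw [← Real.rpow_natCast ‖f y‖ 2]; norm_num
    simp_rw [this]
    exact setIntegral_le_integral hf2 (Filter.Eventually.of_forall fun y => by positivity)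
  -- measure arithmetic
  have hvol_toReal : (volume S).toReal = ε ^ 3 * (volume Ω).toReal := by
    rw [hSvol, ENNReal.toReal_mul, ENNReal.toReal_ofReal (by positivity)]
  have hsqrtS : Real.sqrt ((volume S).toReal)
      = ε ^ ((3 : ℝ) / 2) * Real.sqrt ((volume Ω).toReal) := by
    rw [hvol_toReal, Real.sqrt_mul (by positivity)]
    congr 1
    rw [Real.sqrt_eq_rpow, ← Real.rpow_natCast ε 3, ← Real.rpow_mul hε.le]
    norm_num
  have hf2nonneg : 0 ≤ ∫ y, ‖f y‖ ^ 2 :=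
    integral_nonneg fun y => by positivity
  have hSint_nonneg : 0 ≤ ∫ y in S, ‖f y‖ ^ (2 : ℝ) :=
    integral_nonneg fun y => Real.rpow_nonneg (norm_nonneg _) _
  -- final chain
  calc ‖∫ y in S, f y * h y‖ ≤ ∫ y in S, K * ‖f y‖ := hbound1
    _ = K * ∫ y in S, ‖f y‖ := integral_const_mul K _
    _ ≤ K * ((∫ y in S, ‖f y‖ ^ (2 : ℝ)) ^ ((1 : ℝ) / 2)
          * (∫ _ in S, (1 : ℝ)) ^ ((1 : ℝ) / 2)) :=
        mul_le_mul_of_nonneg_left hCS hK0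
    _ ≤ K * ((∫ y, ‖f y‖ ^ 2) ^ ((1 : ℝ) / 2) * ((volume S).toReal) ^ ((1 : ℝ) / 2)) := by
        rw [hone_int]
        exact mul_le_mul_of_nonneg_left
          (mul_le_mul_of_nonneg_right (Real.rpow_le_rpow hSint_nonneg hsub (by norm_num))
            (Real.rpow_nonneg ENNReal.toReal_nonneg _)) hK0
    _ = K * ε ^ ((3 : ℝ) / 2) * Real.sqrt ((volume Ω).toReal) * Real.sqrt (∫ y, ‖f y‖ ^ 2) := by
        rw [← Real.sqrt_eq_rpow, ← Real.sqrt_eq_rpow, hsqrtS]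
        ring
end
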